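/- Let G be a finite group with a maximal abelian subgroup T, and let μ be an automorphism of G with μ(T) = T; set n := ord(μ), and let c be the number of elements of T whose order divides n. If |T_{μ,n}| > (1/2)·|T_μ|, then the set L := {g ∈ G : ∃ s ∈ T_{μ,n} such that g·s·μ(g⁻¹) ∈ T_{μ,n}} is a subgroup of G containing T_μ, and the index [L : T_μ] is at most c·[N_G(T) : T]. -/

import Mathlib

private lemma cent_conj_mem {G : Type*} [Group G] (g a x : G) :
    x ∈ Subgroup.centralizer {g * a * g⁻¹} ↔ g⁻¹ * x * g ∈ Subgroup.centralizer {a} := by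
  simp only [Subgroup.mem_centralizer_iff, Set.mem_singleton_iff, forall_eq]
  constructor
  · intro h
    calc a * (g⁻¹ * x * g) = g⁻¹ * (g * a * g⁻¹ * x) * g := by group
      _ = g⁻¹ * (x * (g * a * g⁻¹)) * g := by rw [h]
      _ = g⁻¹ * x * g * a := by group
  · intro h
    calc g * a * g⁻¹ * x = g * (a * (g⁻¹ * x * g)) * g⁻¹ := by group
      _ = g * ((g⁻¹ * x * g) * a) * g⁻¹ := by rw [h]
      _ = x * (g * a * g⁻¹) := by group

private lemma key_lemma {G : Type*} [Group G] {T : Subgroup G}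
    (hcomm : ∀ a ∈ T, ∀ b ∈ T, a * b = b * a)
    {μ : MulAut G} {n : ℕ} (hμn : ∀ g : G, (μ ^ n) g = g)
    {g s : G}
    (hs1 : s ∈ T) (hs2 : μ s = s) (hs3 : Subgroup.centralizer {s ^ n} = T)
    (ht1 : g * s * μ g⁻¹ ∈ T) (ht2 : μ (g * s * μ g⁻¹) = g * s * μ g⁻¹)
    (ht3 : Subgroup.centralizer {(g * s * μ g⁻¹) ^ n} = T) :
    g ∈ (Subgroup.normalizer (T : Set G)) ∧ (μ g)⁻¹ * g ∈ T ∧ μ ((μ g)⁻¹ * g) = (μ g)⁻¹ * g ∧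
      ((μ g)⁻¹ * g) ^ n = 1 ∧
      ∀ s', s' ∈ T → μ s' = s' → Subgroup.centralizer {s' ^ n} = T →
        g * s' * μ g⁻¹ ∈ T ∧ μ (g * s' * μ g⁻¹) = g * s' * μ g⁻¹ ∧
          Subgroup.centralizer {(g * s' * μ g⁻¹) ^ n} = T := by
  have hpow : ∀ (k : ℕ) (x : G), (μ ^ (k + 1)) x = μ ((μ ^ k) x) := by
    intro k x; rw [pow_succ']; rfl
  -- the shifted expressions of t
  have hshift : ∀ k : ℕ, g * s * μ g⁻¹ = (μ ^ k) g * s * ((μ ^ (k + 1)) g)⁻¹ := by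
    intro k
    induction k with
    | zero => simp [map_inv]
    | succ k ih =>
      have h1 := congrArg μ ih
      rw [ht2] at h1
      simp only [map_mul, map_inv, hs2] at h1
      rw [map_inv μ g, h1, ← hpow k g, ← hpow (k + 1) g]
  have hpowt : ∀ k : ℕ, (g * s * μ g⁻¹) ^ k = g * s ^ k * ((μ ^ k) g)⁻¹ := by
    intro k
    induction k with
    | zero => simp
    | succ k ih =>
      rw [pow_succ, pow_succ, ih]
      nth_rewrite 1 [hshift k]
      group
  have htn : (g * s * μ g⁻¹) ^ n = g * s ^ n * g⁻¹ := by rw [hpowt n, hμn g]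
  have hiff : ∀ x : G, g * x * g⁻¹ ∈ T ↔ x ∈ T := by
    intro x
    constructor
    · intro hx
      rw [← ht3, htn, cent_conj_mem] at hx
      rw [show g⁻¹ * (g * x * g⁻¹) * g = x by group, hs3] at hx
      exact hx
    · intro hx
      rw [← ht3, htn, cent_conj_mem]
      rw [show g⁻¹ * (g * x * g⁻¹) * g = x by group, hs3]
      exact hx
  have hNg : g ∈ (Subgroup.normalizer (T : Set G)) := Subgroup.mem_normalizer_iff.mpr fun x => (hiff x).symm
  -- w ∈ T
  have h1 : g⁻¹ * (g * s * μ g⁻¹) * g ∈ T := by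
    refine (hiff _).mp ?_
    rw [show g * (g⁻¹ * (g * s * μ g⁻¹) * g) * g⁻¹ = g * s * μ g⁻¹ by group]
    exact ht1
  have hwT : (μ g)⁻¹ * g ∈ T := by
    have h2 : (μ g)⁻¹ * g = s⁻¹ * (g⁻¹ * (g * s * μ g⁻¹) * g) := by
      rw [map_inv]; group
    rw [h2]
    exact mul_mem (inv_mem hs1) h1
  -- μ w = w
  have ht2' : μ g * s * (μ (μ g))⁻¹ = g * s * (μ g)⁻¹ := by
    have h := ht2
    simp only [map_mul, map_inv, hs2] at h
    exact h
  have hμw : μ ((μ g)⁻¹ * g) = (μ g)⁻¹ * g := by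
    have h2 : (μ (μ g))⁻¹ = s⁻¹ * (μ g)⁻¹ * (g * s * (μ g)⁻¹) := by
      rw [← ht2']; group
    have h3 : μ ((μ g)⁻¹ * g) = s⁻¹ * ((μ g)⁻¹ * g) * s := by
      simp only [map_mul, map_inv]
      rw [h2]; group
    have h4 := hcomm _ hwT s hs1
    calc μ ((μ g)⁻¹ * g) = s⁻¹ * (((μ g)⁻¹ * g) * s) := by rw [h3]; group
      _ = s⁻¹ * (s * ((μ g)⁻¹ * g)) := by rw [h4]
      _ = (μ g)⁻¹ * g := by group
  -- w ^ n = 1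
  have hpw : ∀ k : ℕ, ((μ g)⁻¹ * g) ^ k = ((μ ^ k) g)⁻¹ * g := by
    intro k
    induction k with
    | zero => simp
    | succ k ih =>
      have ih2 : ((μ g)⁻¹ * g) ^ k = ((μ ^ (k + 1)) g)⁻¹ * μ g := by
        have h := congrArg μ ih
        rw [map_pow, hμw] at h
        simp only [map_mul, map_inv] at h
        rw [← hpow k g] at h
        exact h
      rw [pow_succ, ih2]
      group
  have hwn : ((μ g)⁻¹ * g) ^ n = 1 := by
    rw [hpw n, hμn g]; group
  refine ⟨hNg, hwT, hμw, hwn, ?_⟩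
  -- part (c)
  intro s' hs1' hs2' hs3'
  have hμg : μ g = g * ((μ g)⁻¹ * g)⁻¹ := by group
  have e1 : g * s' * μ g⁻¹ = g * (s' * ((μ g)⁻¹ * g)) * g⁻¹ := by
    rw [map_inv]; group
  have hmemT : g * s' * μ g⁻¹ ∈ T := by
    rw [e1]
    exact (hiff _).mpr (mul_mem hs1' hwT)
  have hcs : s' * ((μ g)⁻¹ * g) = ((μ g)⁻¹ * g) * s' := hcomm s' hs1' _ hwT
  have hfix : μ (g * s' * μ g⁻¹) = g * s' * μ g⁻¹ := by
    have hμw2 : (μ (μ g))⁻¹ * μ g = (μ g)⁻¹ * g := by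
      have h := hμw
      simp only [map_mul, map_inv] at h
      exact h
    have hB : (μ (μ g))⁻¹ = (μ g)⁻¹ * g * (μ g)⁻¹ := by
      rw [← hμw2]; group
    have hexp : μ (g * s' * μ g⁻¹) = μ g * s' * (μ (μ g))⁻¹ := by
      simp only [map_mul, map_inv, hs2']
    rw [hexp, hB, map_inv μ g]
    calc μ g * s' * ((μ g)⁻¹ * g * (μ g)⁻¹)
        = μ g * (s' * ((μ g)⁻¹ * g)) * (μ g)⁻¹ := by group
      _ = μ g * (((μ g)⁻¹ * g) * s') * (μ g)⁻¹ := by rw [hcs]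
      _ = g * s' * (μ g)⁻¹ := by group
  have conjpow : ∀ x : G, (g * x * g⁻¹) ^ n = g * x ^ n * g⁻¹ := by
    intro x
    simpa using (map_pow (MulAut.conj g) x n).symm
  have h7 : (g * s' * μ g⁻¹) ^ n = g * s' ^ n * g⁻¹ := by
    rw [e1, conjpow, (show Commute s' ((μ g)⁻¹ * g) from hcs).mul_pow, hwn, mul_one]
  have hcent : Subgroup.centralizer {(g * s' * μ g⁻¹) ^ n} = T := by
    rw [h7]
    ext x
    rw [cent_conj_mem, hs3']
    constructor
    · intro h
      have h8 := (hiff (g⁻¹ * x * g)).mpr h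
      rwa [show g * (g⁻¹ * x * g) * g⁻¹ = x by group] at h8
    · intro h
      refine (hiff _).mp ?_
      rwa [show g * (g⁻¹ * x * g) * g⁻¹ = x by group]
  exact ⟨hmemT, hfix, hcent⟩

/-- **Twisted normalizer lemma.** Let `G` be a finite group with a maximal abelian
subgroup `T`, `μ ∈ Aut(G)` with `μ(T) = T` of order `n`, and let `c` be the number of
elements of `T` of order dividing `n`. If `|T_{μ,n}| > (1/2)|T_μ|`, then
`L = {g ∈ G : ∃ s ∈ T_{μ,n}, g·s·μ(g⁻¹) ∈ T_{μ,n}}` is a subgroup of `G` containing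
`T_μ` with index `[L : T_μ] ≤ c·[N_G(T) : T]`. -/
theorem twisted_normalizer {G : Type*} [Group G] [Finite G] (T : Subgroup G)
    (hcomm : ∀ a ∈ T, ∀ b ∈ T, a * b = b * a)
    (hmax : ∀ T' : Subgroup G, (∀ a ∈ T', ∀ b ∈ T', a * b = b * a) → T ≤ T' → T' = T)
    (μ : MulAut G) (hμT : ∀ g : G, g ∈ T ↔ μ g ∈ T)
    (n : ℕ) (hn : n = orderOf μ)
    (c : ℕ) (hc : c = Nat.card {t : G | t ∈ T ∧ t ^ n = 1})
    (hbig : (1 / 2 : ℝ) * (Nat.card {t : G | t ∈ T ∧ μ t = t} : ℝ) <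
      (Nat.card {t : G | t ∈ T ∧ μ t = t ∧ Subgroup.centralizer {t ^ n} = T} : ℝ)) :
    ∃ L : Subgroup G,
      (L : Set G) = {g : G | ∃ s : G,
          (s ∈ T ∧ μ s = s ∧ Subgroup.centralizer {s ^ n} = T) ∧
          (g * s * μ g⁻¹ ∈ T ∧ μ (g * s * μ g⁻¹) = g * s * μ g⁻¹ ∧
            Subgroup.centralizer {(g * s * μ g⁻¹) ^ n} = T)} ∧
      {g : G | g ∈ T ∧ μ g = g} ⊆ (L : Set G) ∧
      Nat.card L ≤ c * T.relIndex (Subgroup.normalizer (T : Set G)) *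
        Nat.card {g : G | g ∈ T ∧ μ g = g} := by
  classical
  have hμn : ∀ g : G, (μ ^ n) g = g := by
    intro g; rw [hn, pow_orderOf_eq_one]; rfl
  -- the set T_{μ,n} is nonempty
  have hpos : 0 < Nat.card {t : G | t ∈ T ∧ μ t = t ∧ Subgroup.centralizer {t ^ n} = T} := by
    have h0 : (0 : ℝ) ≤ (1 / 2 : ℝ) * (Nat.card {t : G | t ∈ T ∧ μ t = t} : ℝ) := by positivity
    exact_mod_cast h0.trans_lt hbig
  obtain ⟨⟨s₀, hs₀⟩, -⟩ := Nat.card_pos_iff.mp hpos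
  obtain ⟨hs₀1, hs₀2, hs₀3⟩ := hs₀
  -- the candidate carrier set
  set S : Set G := {g : G | ∃ s : G,
      (s ∈ T ∧ μ s = s ∧ Subgroup.centralizer {s ^ n} = T) ∧
      (g * s * μ g⁻¹ ∈ T ∧ μ (g * s * μ g⁻¹) = g * s * μ g⁻¹ ∧
        Subgroup.centralizer {(g * s * μ g⁻¹) ^ n} = T)} with hS
  -- subgroup axioms
  have hone : (1 : G) ∈ S := by
    refine ⟨s₀, ⟨hs₀1, hs₀2, hs₀3⟩, ?_⟩
    simpa using ⟨hs₀1, hs₀2, hs₀3⟩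
  have hmul : ∀ {a b : G}, a ∈ S → b ∈ S → a * b ∈ S := by
    intro a b ha hb
    obtain ⟨sa, hsa, hta⟩ := ha
    obtain ⟨sb, hsb, htb⟩ := hb
    obtain ⟨-, -, -, -, hca⟩ :=
      key_lemma hcomm hμn hsa.1 hsa.2.1 hsa.2.2 hta.1 hta.2.1 hta.2.2
    have h := hca (b * sb * μ b⁻¹) htb.1 htb.2.1 htb.2.2
    refine ⟨sb, hsb, ?_⟩
    have e : a * b * sb * μ (a * b)⁻¹ = a * (b * sb * μ b⁻¹) * μ a⁻¹ := by
      simp only [mul_inv_rev, map_mul, map_inv]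
      group
    rw [e]
    exact h
  have hinv : ∀ {a : G}, a ∈ S → a⁻¹ ∈ S := by
    intro a ha
    obtain ⟨sa, hsa, hta⟩ := ha
    refine ⟨a * sa * μ a⁻¹, hta, ?_⟩
    have e : a⁻¹ * (a * sa * μ a⁻¹) * μ a⁻¹⁻¹ = sa := by
      simp only [inv_inv, map_inv]
      group
    rw [e]
    exact hsa
  -- key facts for elements of S
  have hkey : ∀ g ∈ S, g ∈ (Subgroup.normalizer (T : Set G)) ∧ (μ g)⁻¹ * g ∈ T ∧
      μ ((μ g)⁻¹ * g) = (μ g)⁻¹ * g ∧ ((μ g)⁻¹ * g) ^ n = 1 := by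
    intro g hg
    obtain ⟨s, hs, ht⟩ := hg
    obtain ⟨h1, h2, h3, h4, -⟩ :=
      key_lemma hcomm hμn hs.1 hs.2.1 hs.2.2 ht.1 ht.2.1 ht.2.2
    exact ⟨h1, h2, h3, h4⟩
  -- T_μ ⊆ S
  have hsub : {g : G | g ∈ T ∧ μ g = g} ⊆ S := by
    intro x hx
    obtain ⟨hx1, hx2⟩ := hx
    refine ⟨s₀, ⟨hs₀1, hs₀2, hs₀3⟩, ?_⟩
    have e : x * s₀ * μ x⁻¹ = s₀ := by
      rw [map_inv, hx2, hcomm x hx1 s₀ hs₀1]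
      group
    rw [e]
    exact ⟨hs₀1, hs₀2, hs₀3⟩
  -- counting injection
  let q : ↥S → ((Subgroup.normalizer (T : Set G)) ⧸ T.subgroupOf (Subgroup.normalizer (T : Set G))) :=
    fun a => QuotientGroup.mk ⟨a.1, (hkey a.1 a.2).1⟩
  let wm : ↥S → G := fun a => (μ (a : G))⁻¹ * a
  let r : ((Subgroup.normalizer (T : Set G)) ⧸ T.subgroupOf (Subgroup.normalizer (T : Set G))) × G → G :=
    fun p => if h : ∃ b : ↥S, (q b, wm b) = p then ((h.choose : ↥S) : G) else 1
  have hwprf : ∀ a : ↥S, wm a ∈ {t : G | t ∈ T ∧ t ^ n = 1} :=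
    fun a => ⟨(hkey a a.2).2.1, (hkey a a.2).2.2.2⟩
  -- if two elements of S have the same coset and same w, they differ by T_μ
  have hinjkey : ∀ a b : ↥S, q a = q b → wm a = wm b →
      ((b : G)⁻¹ * a ∈ T ∧ μ ((b : G)⁻¹ * (a : G)) = (b : G)⁻¹ * a) := by
    intro a b hq hw
    have hmem : (b : G)⁻¹ * a ∈ T := by
      have h2 : (⟨a.1, (hkey a.1 a.2).1⟩ : (Subgroup.normalizer (T : Set G)))⁻¹ * ⟨b.1, (hkey b.1 b.2).1⟩ ∈
          T.subgroupOf (Subgroup.normalizer (T : Set G)) := QuotientGroup.eq.mp hq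
      rw [Subgroup.mem_subgroupOf] at h2
      have h3 : (a : G)⁻¹ * b ∈ T := h2
      have h4 := inv_mem h3
      rwa [mul_inv_rev, inv_inv] at h4
    have hw' : (μ (a : G))⁻¹ * a = (μ (b : G))⁻¹ * b := hw
    have hwT : (μ (b : G))⁻¹ * b ∈ T := (hkey b b.2).2.1
    have hμa : μ (a : G) = a * ((μ (b : G))⁻¹ * b)⁻¹ := by
      rw [← hw']; group
    have hμb : μ (b : G) = b * ((μ (b : G))⁻¹ * b)⁻¹ := by group
    have h5 : μ ((b : G)⁻¹ * a) =
        ((μ (b : G))⁻¹ * b) * ((b : G)⁻¹ * a) * ((μ (b : G))⁻¹ * b)⁻¹ := by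
      rw [map_mul, map_inv, hμa, hμb]
      group
    refine ⟨hmem, ?_⟩
    rw [h5, hcomm _ hwT _ hmem]
    group
  have hthird : ∀ a : ↥S, (r (q a, wm a))⁻¹ * a ∈ {g : G | g ∈ T ∧ μ g = g} := by
    intro a
    have hex : ∃ b : ↥S, (q b, wm b) = (q a, wm a) := ⟨a, rfl⟩
    have hr : r (q a, wm a) = ((hex.choose : ↥S) : G) := dif_pos hex
    have hch := hex.choose_spec
    have e1 : q hex.choose = q a := congrArg Prod.fst hch
    have e2 : wm hex.choose = wm a := congrArg Prod.snd hch
    have := hinjkey a hex.choose e1.symm e2.symm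
    rw [hr]
    exact ⟨this.1, this.2⟩
  have hinj : Function.Injective (fun a : ↥S =>
      ((q a, (⟨wm a, hwprf a⟩ : {t : G | t ∈ T ∧ t ^ n = 1}),
        (⟨(r (q a, wm a))⁻¹ * a, hthird a⟩ : {g : G | g ∈ T ∧ μ g = g})) :
        ((Subgroup.normalizer (T : Set G)) ⧸ T.subgroupOf (Subgroup.normalizer (T : Set G))) × {t : G | t ∈ T ∧ t ^ n = 1} ×
          {g : G | g ∈ T ∧ μ g = g})) := by
    intro a b hab
    simp only [Prod.mk.injEq, Subtype.mk.injEq] at hab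
    obtain ⟨h1, h2, h3⟩ := hab
    rw [h1, h2] at h3
    exact Subtype.ext (mul_left_cancel h3)
  have hcard : Nat.card ↥S ≤ c * T.relIndex (Subgroup.normalizer (T : Set G)) *
      Nat.card {g : G | g ∈ T ∧ μ g = g} := by
    calc Nat.card ↥S ≤ Nat.card (((Subgroup.normalizer (T : Set G)) ⧸ T.subgroupOf (Subgroup.normalizer (T : Set G))) ×
          {t : G | t ∈ T ∧ t ^ n = 1} × {g : G | g ∈ T ∧ μ g = g}) :=
        Nat.card_le_card_of_injective _ hinj
      _ = Nat.card ((Subgroup.normalizer (T : Set G)) ⧸ T.subgroupOf (Subgroup.normalizer (T : Set G))) *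
          (Nat.card {t : G | t ∈ T ∧ t ^ n = 1} * Nat.card {g : G | g ∈ T ∧ μ g = g}) := by
        rw [Nat.card_prod, Nat.card_prod]
      _ = c * T.relIndex (Subgroup.normalizer (T : Set G)) * Nat.card {g : G | g ∈ T ∧ μ g = g} := by
        have hQ : Nat.card ((Subgroup.normalizer (T : Set G)) ⧸ T.subgroupOf (Subgroup.normalizer (T : Set G))) =
            T.relIndex (Subgroup.normalizer (T : Set G)) := rfl
        rw [hQ, ← hc]
        ring
  refine ⟨{ carrier := S, one_mem' := hone, mul_mem' := hmul, inv_mem' := hinv }, rfl, hsub, ?_⟩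
  exact hcard
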